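/- The upper bound 2 + H_α(w) in the alphabetic redundancy chain is asymptotically tight: for w_ε = (ε, 1-2ε, ε) with a ∈ (1/2,1) fixed and α = 1/(1+log₂ a), as ε → 0⁺ the Rényi entropy H_α(w_ε) → 0 while the optimal alphabetic cost L_a^ā(w_ε) → 2; hence sup over w of (L_a^ā(w) - H_α(w)) ≥ 2. -/

import Mathlib

open Real Finset

/-- Full binary tree: every internal node has two children. -/
inductive BTree where
  | leaf : BTree
  | node : BTree → BTree → BTree

namespace BTree

/-- Depths of the leaves, read in left-to-right (inorder) order. -/
def depths : BTree → List ℕ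
  | leaf => [0]
  | node l r => (l.depths ++ r.depths).map (· + 1)

/-- Number of leaves. -/
def numLeaves (t : BTree) : ℕ := t.depths.length

/-- The splitting point: smallest (1-based) leaf index of the right subtree. -/
def splitPoint : BTree → ℕ
  | leaf => 1
  | node l _ => l.numLeaves + 1

end BTree

/-- Binary tree possibly having single-child internal nodes. -/
inductive PTree where
  | leaf : PTree
  | node1 : PTree → PTree
  | node2 : PTree → PTree → PTree

def PTree.depths : PTree → List ℕ
  | .leaf => [0]
  | .node1 t => t.depths.map (· + 1)
  | .node2 l r => (l.depths ++ r.depths).map (· + 1)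

/-- `SubtreeAt t' o t` : `t'` is a subtree of `t` whose leaves are the leaves
`o, o+1, …` (0-based offset `o`) of `t`. -/
inductive SubtreeAt : BTree → ℕ → BTree → Prop
  | refl (t : BTree) : SubtreeAt t 0 t
  | left {t' : BTree} {o : ℕ} {l r : BTree} : SubtreeAt t' o l → SubtreeAt t' o (BTree.node l r)
  | right {t' : BTree} {o : ℕ} {l r : BTree} : SubtreeAt t' o r →
      SubtreeAt t' (l.numLeaves + o) (BTree.node l r)

/-- Weighted exponential cost `∑ w(i)·a^{l(i)}` of a tree, weights given as a list. -/
noncomputable def cost (a : ℝ) (ws : List ℝ) (t : BTree) : ℝ :=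
  (List.zipWith (fun wi d => wi * a ^ d) ws t.depths).sum

/-- `L_a(w,l) = log_a ∑ w(i) a^{l(i)}`, `Fin`-indexed. -/
noncomputable def La {n : ℕ} (a : ℝ) (w : Fin n → ℝ) (l : Fin n → ℕ) : ℝ :=
  Real.logb a (∑ i, w i * a ^ (l i))

/-- `L_a(w,l)`, ℕ-indexed with `n` symbols. -/
noncomputable def LaN (a : ℝ) (n : ℕ) (w : ℕ → ℝ) (l : ℕ → ℕ) : ℝ :=
  Real.logb a (∑ i ∈ Finset.range n, w i * a ^ (l i))

/-- Costs achievable by alphabetic binary trees on `n` leaves with weights `w`. -/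
noncomputable def AlphaSet (a : ℝ) (n : ℕ) (w : ℕ → ℝ) : Set ℝ :=
  {x | ∃ (lT : ℕ → ℕ) (T : BTree), T.depths = (List.range n).map lT ∧ x = LaN a n w lT}

/-- The indices `j..j+k` form a plateau of `l` which is a strict local minimum,
with strictly larger values at indices `j-1` and `j+k+1`, entirely interior to `0..n-1`. -/
def PlateauMin (n : ℕ) (l : ℕ → ℕ) (j k : ℕ) : Prop :=
  0 < j ∧ j + k + 1 < n ∧ l j < l (j - 1) ∧ (∀ m, j ≤ m → m ≤ j + k → l m = l j) ∧
    l j < l (j + k + 1)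

/-- The natural number a binary codeword (MSB first) represents. -/
def codeToNat (c : List Bool) : ℕ := c.foldl (fun n b => 2 * n + cond b 1 0) 0

/-- The `k`-bit binary codeword (MSB first) representing `m`. -/
def natToCode (k m : ℕ) : List Bool := (List.range k).map (fun i => m.testBit (k - 1 - i))


lemma btree_depths_len_pos (t : BTree) : 1 ≤ t.depths.length := by
  induction t with
  | leaf => simp [BTree.depths]
  | node l r ihl ihr => simp [BTree.depths]; omega

lemma btree_len1 (t : BTree) (h : t.depths.length = 1) : t.depths = [0] := by
  cases t with
  | leaf => rfl
  | node l r =>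
    have hl := btree_depths_len_pos l
    have hr := btree_depths_len_pos r
    simp [BTree.depths] at h
    omega

lemma btree_len2 (t : BTree) (h : t.depths.length = 2) : t.depths = [1, 1] := by
  cases t with
  | leaf => simp [BTree.depths] at h
  | node l r =>
    have hl := btree_depths_len_pos l
    have hr := btree_depths_len_pos r
    simp [BTree.depths] at h
    have h1 : l.depths.length = 1 := by omega
    have h2 : r.depths.length = 1 := by omega
    simp [BTree.depths, btree_len1 l h1, btree_len1 r h2]

lemma btree_len3 (t : BTree) (h : t.depths.length = 3) :
    t.depths = [1, 2, 2] ∨ t.depths = [2, 2, 1] := by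
  cases t with
  | leaf => simp [BTree.depths] at h
  | node l r =>
    have hl := btree_depths_len_pos l
    have hr := btree_depths_len_pos r
    simp [BTree.depths] at h
    rcases Nat.lt_or_ge l.depths.length 2 with h1 | h1
    · have hl1 : l.depths.length = 1 := by omega
      have hr2 : r.depths.length = 2 := by omega
      left
      simp [BTree.depths, btree_len1 l hl1, btree_len2 r hr2]
    · have hl2 : l.depths.length = 2 := by omega
      have hr1 : r.depths.length = 1 := by omega
      right
      simp [BTree.depths, btree_len2 l hl2, btree_len1 r hr1]

/-- for `w_ε = (ε, 1-2ε, ε)`, as `ε → 0⁺` the Rényi entropy tends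
to `0` while the optimal alphabetic cost tends to `2`; hence no constant
`c < 2` bounds the alphabetic redundancy `L_a^ā(w) - H_α(w)`. -/
theorem stmt15 (a : ℝ) (ha : 1 / 2 < a) (ha1 : a < 1)
    (α : ℝ) (hα : α = 1 / (1 + Real.logb 2 a))
    (Hf : ℝ → ℝ)
    (hHf : ∀ ε, Hf ε = (1 / (1 - α)) *
      Real.logb 2 (ε ^ α + (1 - 2 * ε) ^ α + ε ^ α))
    (Lab : ℝ → ℝ)
    (hLab : ∀ ε ∈ Set.Ioo (0 : ℝ) (1 / 2),
      IsLeast (AlphaSet a 3 (fun i => if i = 1 then 1 - 2 * ε else ε)) (Lab ε)) :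
    Filter.Tendsto Hf (nhdsWithin 0 (Set.Ioi 0)) (nhds 0) ∧
    Filter.Tendsto Lab (nhdsWithin 0 (Set.Ioi 0)) (nhds 2) ∧
    ∀ c : ℝ, (∀ ε ∈ Set.Ioo (0 : ℝ) (1 / 2), Lab ε - Hf ε ≤ c) → 2 ≤ c := by
  -- basic facts about a and α
  have ha0 : (0 : ℝ) < a := lt_trans (by norm_num) ha
  have hlog2 : (0 : ℝ) < Real.log 2 := Real.log_pos (by norm_num)
  have hloga_neg : Real.log a < 0 := Real.log_neg ha0 ha1
  have h12 : Real.log (1 / 2) < Real.log a := Real.log_lt_log (by norm_num) ha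
  have h12' : -Real.log 2 < Real.log a := by
    rwa [Real.log_div one_ne_zero two_ne_zero, Real.log_one, zero_sub] at h12
  have hlogb_lt : -1 < Real.logb 2 a := by
    rw [Real.logb, lt_div_iff₀ hlog2]
    linarith
  have hlogb_neg : Real.logb 2 a < 0 := div_neg_of_neg_of_pos hloga_neg hlog2
  have hden : 0 < 1 + Real.logb 2 a := by linarith
  have hα1 : 1 < α := by
    rw [hα, lt_div_iff₀ hden]
    linarith
  have hαpos : 0 < α := by linarith
  -- Part 1 : Hf → 0
  have hrp : Filter.Tendsto (fun ε : ℝ => ε ^ α + (1 - 2 * ε) ^ α + ε ^ α)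
      (nhds 0) (nhds 1) := by
    have h1 : Filter.Tendsto (fun ε : ℝ => ε ^ α) (nhds 0) (nhds 0) := by
      have := (Real.continuousAt_rpow_const 0 α (Or.inr hαpos.le)).tendsto
      simpa [Real.zero_rpow (ne_of_gt hαpos)] using this
    have h2 : Filter.Tendsto (fun ε : ℝ => (1 - 2 * ε) ^ α) (nhds 0) (nhds 1) := by
      have hc : ContinuousAt (fun x : ℝ => x ^ α) 1 :=
        Real.continuousAt_rpow_const 1 α (Or.inl one_ne_zero)
      have hlin : Filter.Tendsto (fun ε : ℝ => 1 - 2 * ε) (nhds 0) (nhds 1) := by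
        have : Continuous (fun ε : ℝ => 1 - 2 * ε) := by continuity
        simpa using this.tendsto 0
      simpa [Real.one_rpow, Function.comp_def] using hc.tendsto.comp hlin
    have := (h1.add h2).add h1
    simpa using this
  have hHtend : Filter.Tendsto Hf (nhdsWithin 0 (Set.Ioi 0)) (nhds 0) := by
    have hlogb1 : Filter.Tendsto (fun x : ℝ => Real.logb 2 x) (nhds 1) (nhds 0) := by
      have : ContinuousAt (fun x : ℝ => Real.logb 2 x) 1 := by
        apply ContinuousAt.div_const
        exact Real.continuousAt_log one_ne_zero
      simpa [Real.logb, Real.log_one] using this.tendsto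
    have hcomp : Filter.Tendsto
        (fun ε : ℝ => (1 / (1 - α)) * Real.logb 2 (ε ^ α + (1 - 2 * ε) ^ α + ε ^ α))
        (nhds 0) (nhds 0) := by
      have := (hlogb1.comp hrp).const_mul (1 / (1 - α))
      simpa using this
    have : Filter.Tendsto Hf (nhds 0) (nhds 0) := by
      have heq : Hf = fun ε : ℝ =>
          (1 / (1 - α)) * Real.logb 2 (ε ^ α + (1 - 2 * ε) ^ α + ε ^ α) :=
        funext hHf
      rw [heq]; exact hcomp
    exact this.mono_left nhdsWithin_le_nhds
  -- Part 2 : Lab → 2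
  have hLtend : Filter.Tendsto Lab (nhdsWithin 0 (Set.Ioi 0)) (nhds 2) := by
    have hkey : ∀ ε ∈ Set.Ioo (0 : ℝ) (1 / 2),
        Lab ε = Real.logb a (ε * a + (1 - 2 * ε) * a ^ 2 + ε * a ^ 2) := by
      intro ε hε
      obtain ⟨hmem, -⟩ := hLab ε hε
      obtain ⟨lT, T, hT, hx⟩ := hmem
      have hrange : (List.range 3).map lT = [lT 0, lT 1, lT 2] := by
        simp [List.range_succ]
      rw [hrange] at hT
      have hlen : T.depths.length = 3 := by rw [hT]; rfl
      have hsum : (∑ i ∈ Finset.range 3,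
          (fun i => if i = 1 then 1 - 2 * ε else ε) i * a ^ lT i)
          = ε * a ^ lT 0 + (1 - 2 * ε) * a ^ lT 1 + ε * a ^ lT 2 := by
        rw [Finset.sum_range_succ, Finset.sum_range_succ, Finset.sum_range_succ]
        norm_num
      rcases btree_len3 T hlen with hcase | hcase <;>
      · rw [hT] at hcase
        obtain ⟨e0, e1, e2, -⟩ : lT 0 = _ ∧ lT 1 = _ ∧ lT 2 = _ ∧ True := by
          simpa using hcase
        rw [hx, LaN, hsum, e0, e1, e2]
        ring_nf
    have hval : 0 < a ^ 2 := by positivity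
    have hlogcont : Filter.Tendsto (fun x : ℝ => Real.logb a x) (nhds (a ^ 2)) (nhds 2) := by
      have hc : ContinuousAt (fun x : ℝ => Real.logb a x) (a ^ 2) := by
        apply ContinuousAt.div_const
        exact Real.continuousAt_log (ne_of_gt hval)
      have hv : Real.logb a (a ^ 2) = 2 := by
        rw [Real.logb, Real.log_pow, mul_div_assoc, div_self hloga_neg.ne]
        norm_num
      simpa [hv] using hc.tendsto
    have hinner : Filter.Tendsto (fun ε : ℝ => ε * a + (1 - 2 * ε) * a ^ 2 + ε * a ^ 2)
        (nhds 0) (nhds (a ^ 2)) := by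
      have : Continuous (fun ε : ℝ => ε * a + (1 - 2 * ε) * a ^ 2 + ε * a ^ 2) := by
        continuity
      have := this.tendsto 0
      simpa using this
    have hg : Filter.Tendsto
        (fun ε : ℝ => Real.logb a (ε * a + (1 - 2 * ε) * a ^ 2 + ε * a ^ 2))
        (nhdsWithin 0 (Set.Ioi 0)) (nhds 2) :=
      ((hlogcont.comp hinner).mono_left nhdsWithin_le_nhds)
    have hmemIoo : Set.Ioo (0 : ℝ) (1 / 2) ∈ nhdsWithin (0 : ℝ) (Set.Ioi 0) :=
      Ioo_mem_nhdsGT_of_mem (by constructor <;> norm_num)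
    exact hg.congr' (Filter.eventuallyEq_of_mem hmemIoo (fun ε hε => (hkey ε hε).symm))
  refine ⟨hHtend, hLtend, ?_⟩
  -- Part 3
  intro c hc
  have hsub : Filter.Tendsto (fun ε => Lab ε - Hf ε) (nhdsWithin 0 (Set.Ioi 0)) (nhds 2) := by
    simpa using hLtend.sub hHtend
  have hmemIoo : Set.Ioo (0 : ℝ) (1 / 2) ∈ nhdsWithin (0 : ℝ) (Set.Ioi 0) :=
    Ioo_mem_nhdsGT_of_mem (by constructor <;> norm_num)
  exact le_of_tendsto hsub (Filter.eventually_of_mem hmemIoo (fun ε hε => hc ε hε))
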